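/- arXiv:2106.05526 — 3 statements merged into one kernel-verified Lean document; each statement's English description precedes it below -/
import Mathlib

section
/- Under the uniformly-distributed condition, the one-step state distribution evolution of the hypothetical policy satisfies p_π̃(s_{t+1}=s) = Σ_{s'∈S} p_π̃(s_t=s') · C(τ, s', ·, s, t)/C(τ, s', ·, ·, t), where C counts transitions in the trajectory set τ. -/
/-- `C τ s a s' t`: number of transitions in the trajectory set taking action `a`
in state `s` at timestep `t` and arriving at `s'` (trajectories indexed by `Fin N`). -/
def transCount {S A : Type*} [DecidableEq S] [DecidableEq A] (N : ℕ)
    (traj : Fin N → ℕ → S) (act : Fin N → ℕ → A) (s : S) (a : A) (s' : S) (t : ℕ) : ℕ :=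
  (Finset.univ.filter (fun i : Fin N => traj i t = s ∧ act i t = a ∧ traj i (t + 1) = s')).card

/-- Under the uniformly-distributed condition and the time-homogeneity
identity, the one-step state-distribution evolution of the hypothetical policy
`π̃(a|s) = C(τ,s,a,·,·)/C(τ,s,·,·,·)` satisfies
`p_π̃(s_{t+1}=s) = ∑_{s'} p_π̃(s_t=s') · C(τ,s',·,s,t)/C(τ,s',·,·,t)`. -/
theorem ssrl_one_step_evolution
    {S A : Type*} [Fintype S] [Fintype A] [DecidableEq S] [DecidableEq A]
    (N T : ℕ) (traj : Fin N → ℕ → S) (act : Fin N → ℕ → A)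
    (P : S → S → A → ℝ)       -- P s' s a = P(s'|s,a)
    (p : ℕ → S → ℝ)            -- p t s = p_π̃(s_t = s)
    -- uniformly-distributed condition on transitions
    (huni : ∀ (s : S) (a : A) (s' : S) (t : ℕ),
      0 < ∑ s'' : S, transCount N traj act s a s'' t →
      P s' s a = (transCount N traj act s a s' t : ℝ)
                  / (∑ s'' : S, transCount N traj act s a s'' t : ℕ))
    -- time-homogeneity identity for the empirical action frequencies
    (hhom : ∀ (s' : S) (a : A) (t : ℕ),
      ((∑ t' ∈ Finset.range (T + 1), ∑ s'' : S, transCount N traj act s' a s'' t' : ℕ) : ℝ)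
          / ((∑ t' ∈ Finset.range (T + 1), ∑ a' : A, ∑ s'' : S,
                transCount N traj act s' a' s'' t' : ℕ) : ℝ)
        = ((∑ s'' : S, transCount N traj act s' a s'' t : ℕ) : ℝ)
          / ((∑ a' : A, ∑ s'' : S, transCount N traj act s' a' s'' t : ℕ) : ℝ))
    -- standard Markov evolution under the hypothetical policy π̃
    (hrec : ∀ (t : ℕ) (s : S), p (t + 1) s =
      ∑ s' : S, ∑ a : A, p t s'
        * (((∑ t' ∈ Finset.range (T + 1), ∑ s'' : S, transCount N traj act s' a s'' t' : ℕ) : ℝ)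
            / ((∑ t' ∈ Finset.range (T + 1), ∑ a' : A, ∑ s'' : S,
                  transCount N traj act s' a' s'' t' : ℕ) : ℝ))
        * P s s' a) :
    ∀ (t : ℕ) (s : S), p (t + 1) s =
      ∑ s' : S, p t s'
        * ((∑ a : A, transCount N traj act s' a s t : ℕ) : ℝ)
          / ((∑ a : A, ∑ s'' : S, transCount N traj act s' a s'' t : ℕ) : ℝ) := by
  intro t s
  rw [hrec]
  refine Finset.sum_congr rfl (fun s' _ => ?_)
  have key : ∀ a : A, p t s'
        * (((∑ t' ∈ Finset.range (T + 1), ∑ s'' : S, transCount N traj act s' a s'' t' : ℕ) : ℝ)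
            / ((∑ t' ∈ Finset.range (T + 1), ∑ a' : A, ∑ s'' : S,
                  transCount N traj act s' a' s'' t' : ℕ) : ℝ))
        * P s s' a
      = p t s' * (transCount N traj act s' a s t : ℝ)
          / ((∑ a' : A, ∑ s'' : S, transCount N traj act s' a' s'' t : ℕ) : ℝ) := by
    intro a
    rw [hhom s' a t]
    rcases Nat.eq_zero_or_pos (∑ s'' : S, transCount N traj act s' a s'' t) with h0 | hpos
    · have hc : transCount N traj act s' a s t = 0 := by
        have := Finset.sum_eq_zero_iff.mp h0 s (Finset.mem_univ s)
        exact this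
      rw [h0, hc]
      simp
    · rw [huni s' a s t hpos]
      have hne : ((∑ s'' : S, transCount N traj act s' a s'' t : ℕ) : ℝ) ≠ 0 := by
        exact_mod_cast hpos.ne'
      set na := ((∑ s'' : S, transCount N traj act s' a s'' t : ℕ) : ℝ)
      set D := ((∑ a' : A, ∑ s'' : S, transCount N traj act s' a' s'' t : ℕ) : ℝ)
      set C := (transCount N traj act s' a s t : ℝ)
      calc p t s' * (na / D) * (C / na) = p t s' * C / D * (na / na) := by ring
        _ = p t s' * C / D := by rw [div_self hne, mul_one]
  rw [Finset.sum_congr rfl (fun a _ => key a), ← Finset.sum_div, ← Finset.mul_sum]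
  push_cast
  rw [mul_div_assoc]
end

section
/- Under the uniformly-distributed condition (including that initial state frequencies match p₀, i.e. p₀(s) = C(τ,s,·,·,0)/|τ|), the state occupancy of the hypothetical policy matches the empirical frequencies at every timestep: for all s ∈ S and all t ∈ {0,…,T}, p_π̃(s_t = s) = C(τ, s, ·, ·, t)/|τ|. -/
lemma sum_trans_eq {S A : Type*} [Fintype S] [Fintype A] [DecidableEq S] [DecidableEq A]
    (N : ℕ) (traj : Fin N → ℕ → S) (act : Fin N → ℕ → A) (s : S) (a : A) (t : ℕ) :
    ∑ s'' : S, transCount N traj act s a s'' t =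
      (Finset.univ.filter (fun i : Fin N => traj i t = s ∧ act i t = a)).card := by
  simp only [transCount, Finset.card_filter]
  rw [Finset.sum_comm]
  apply Finset.sum_congr rfl
  intro i _
  by_cases h : traj i t = s ∧ act i t = a
  · simp [h]
  · simp only [h, if_false]
    rw [Finset.sum_eq_zero]
    intro x _
    simp only [ite_eq_right_iff]
    intro hc
    exact absurd ⟨hc.1, hc.2.1⟩ h

lemma sum_sum_trans_eq {S A : Type*} [Fintype S] [Fintype A] [DecidableEq S] [DecidableEq A]
    (N : ℕ) (traj : Fin N → ℕ → S) (act : Fin N → ℕ → A) (s : S) (t : ℕ) :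
    ∑ s' : S, ∑ a : A, transCount N traj act s' a s t =
      (Finset.univ.filter (fun i : Fin N => traj i (t + 1) = s)).card := by
  simp only [transCount, Finset.card_filter]
  rw [show (∑ s' : S, ∑ a : A, ∑ i : Fin N,
        if traj i t = s' ∧ act i t = a ∧ traj i (t + 1) = s then 1 else 0)
      = ∑ i : Fin N, ∑ s' : S, ∑ a : A,
        if traj i t = s' ∧ act i t = a ∧ traj i (t + 1) = s then 1 else 0 from
    (Finset.sum_congr rfl fun _ _ => Finset.sum_comm).trans Finset.sum_comm]
  apply Finset.sum_congr rfl
  intro i _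
  by_cases h : traj i (t + 1) = s
  · rw [Finset.sum_eq_single (traj i t)]
    · simp [h]
    · intro b _ hb
      exact Finset.sum_eq_zero fun a _ => if_neg (fun hc => hb hc.1.symm)
    · simp
  · simp [h]

/-- Under the uniformly-distributed condition (initial frequencies match `p₀`
and empirical transition frequencies match `P`), the state occupancy of the hypothetical
policy `π̃(a|s)` at time `t` (= `C(τ,s,a,·,t)/C(τ,s,·,·,t)`) matches the empirical
frequencies at every timestep: `p_π̃(s_t = s) = C(τ,s,·,·,t)/|τ|` for all `s` and `t ≤ T`. -/
theorem ssrl_occupancy_matches_empirical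
    {S A : Type*} [Fintype S] [Fintype A] [DecidableEq S] [DecidableEq A]
    (N T : ℕ) (hN : 0 < N) (traj : Fin N → ℕ → S) (act : Fin N → ℕ → A)
    (p₀ : S → ℝ) (P : S → S → A → ℝ)   -- P s' s a = P(s'|s,a)
    (p : ℕ → S → ℝ)                     -- occupancy of the hypothetical policy
    -- uniformly-distributed condition, initial states
    (hinit : ∀ s : S, p₀ s =
      ((Finset.univ.filter (fun i : Fin N => traj i 0 = s)).card : ℝ) / (N : ℝ))
    -- uniformly-distributed condition, transitions
    (huni : ∀ (s : S) (a : A) (s' : S) (t : ℕ),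
      0 < ∑ s'' : S, transCount N traj act s a s'' t →
      P s' s a = (transCount N traj act s a s' t : ℝ)
                  / (∑ s'' : S, transCount N traj act s a s'' t : ℕ))
    -- occupancy recursion under the (time-dependent) hypothetical policy π̃
    (hp0 : ∀ s : S, p 0 s = p₀ s)
    (hrec : ∀ (t : ℕ) (s : S), p (t + 1) s =
      ∑ s' : S, ∑ a : A, p t s'
        * (((∑ s'' : S, transCount N traj act s' a s'' t : ℕ) : ℝ)
            / (((Finset.univ.filter (fun i : Fin N => traj i t = s')).card : ℕ) : ℝ))
        * P s s' a) :
    ∀ t ≤ T, ∀ s : S,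
      p t s = ((Finset.univ.filter (fun i : Fin N => traj i t = s)).card : ℝ) / (N : ℝ) := by
  have main : ∀ t : ℕ, ∀ s : S,
      p t s = ((Finset.univ.filter (fun i : Fin N => traj i t = s)).card : ℝ) / (N : ℝ) := by
    intro t
    induction t with
    | zero => intro s; rw [hp0, hinit]
    | succ t ih =>
      intro s
      rw [hrec t s]
      have key : ∀ s' : S, ∀ a : A,
          p t s' * (((∑ s'' : S, transCount N traj act s' a s'' t : ℕ) : ℝ)
              / (((Finset.univ.filter (fun i : Fin N => traj i t = s')).card : ℕ) : ℝ))
            * P s s' a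
          = (transCount N traj act s' a s t : ℝ) / (N : ℝ) := by
        intro s' a
        set c := (Finset.univ.filter (fun i : Fin N => traj i t = s')).card with hc
        set m := ∑ s'' : S, transCount N traj act s' a s'' t with hm
        have hqm : transCount N traj act s' a s t ≤ m := by
          rw [hm]
          exact Finset.single_le_sum (f := fun s'' => transCount N traj act s' a s'' t)
            (fun _ _ => Nat.zero_le _) (Finset.mem_univ s)
        have hmc : m ≤ c := by
          rw [hm, sum_trans_eq, hc]
          apply Finset.card_le_card
          intro i hi
          simp only [Finset.mem_filter] at *
          exact ⟨hi.1, hi.2.1⟩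
        rcases Nat.eq_zero_or_pos m with hm0 | hmpos
        · have hq0 : transCount N traj act s' a s t = 0 := Nat.le_zero.mp (hm0 ▸ hqm)
          rw [hq0, hm0]
          simp
        · have hcpos : 0 < c := lt_of_lt_of_le hmpos hmc
          rw [ih s', huni s' a s t (lt_of_lt_of_eq hmpos hm), ← hm, ← hc]
          have hNne : (N : ℝ) ≠ 0 := Nat.cast_ne_zero.mpr hN.ne'
          have hcne : (c : ℝ) ≠ 0 := Nat.cast_ne_zero.mpr hcpos.ne'
          have hmne : (m : ℝ) ≠ 0 := Nat.cast_ne_zero.mpr hmpos.ne'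
          field_simp
      calc ∑ s' : S, ∑ a : A, p t s'
          * (((∑ s'' : S, transCount N traj act s' a s'' t : ℕ) : ℝ)
              / (((Finset.univ.filter (fun i : Fin N => traj i t = s')).card : ℕ) : ℝ))
          * P s s' a
          = ∑ s' : S, ∑ a : A, (transCount N traj act s' a s t : ℝ) / (N : ℝ) := by
            apply Finset.sum_congr rfl; intro s' _
            apply Finset.sum_congr rfl; intro a _
            exact key s' a
        _ = _ := by
            rw [← sum_sum_trans_eq N traj act s t]
            push_cast
            simp [Finset.sum_div]
  intro t _ s
  exact main t s
end

section
/- Policy improvement theorem for SSRL: if the trajectories τ in the buffer satisfy the uniformly-distributed condition and their mean discounted cumulative reward is at least R(π) (i.e., trajectories improvement δ(τ) = (1/|τ|)Σ_i R(τ_i) − R(π) ≥ 0), then the hypothetical policy π̃ constructed from τ satisfies R(π̃) ≥ R(π). -/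
section aux
variable {S A : Type*} [Fintype S] [Fintype A] [DecidableEq S] [DecidableEq A]
  (N : ℕ) (traj : Fin N → ℕ → S) (act : Fin N → ℕ → A)

lemma sum_transCount_eq (s : S) (a : A) (t : ℕ) :
    ∑ s'' : S, transCount N traj act s a s'' t
      = (Finset.univ.filter (fun i : Fin N => traj i t = s ∧ act i t = a)).card := by
  simp only [transCount, Finset.card_filter]
  rw [Finset.sum_comm]
  congr 1; ext i
  by_cases h1 : traj i t = s <;> by_cases h2 : act i t = a <;> simp [h1, h2]

lemma sum_sum_transCount_eq (s : S) (t : ℕ) :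
    ∑ s' : S, ∑ a : A, transCount N traj act s' a s t
      = (Finset.univ.filter (fun i : Fin N => traj i (t + 1) = s)).card := by
  simp only [transCount, Finset.card_filter]
  calc ∑ s' : S, ∑ a : A, ∑ i : Fin N,
        (if traj i t = s' ∧ act i t = a ∧ traj i (t + 1) = s then 1 else 0)
      = ∑ s' : S, ∑ i : Fin N, ∑ a : A,
        (if traj i t = s' ∧ act i t = a ∧ traj i (t + 1) = s then 1 else 0) :=
        Finset.sum_congr rfl fun s' _ => Finset.sum_comm
    _ = ∑ i : Fin N, ∑ s' : S, ∑ a : A,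
        (if traj i t = s' ∧ act i t = a ∧ traj i (t + 1) = s then 1 else 0) :=
        Finset.sum_comm
    _ = ∑ i : Fin N, (if traj i (t + 1) = s then 1 else 0) := by
        refine Finset.sum_congr rfl fun i _ => ?_
        by_cases h3 : traj i (t+1) = s
        · simp [h3, ite_and, Finset.sum_ite_eq]
        · simp [h3]

lemma sum_count_mul (t : ℕ) (r : S → ℝ) :
    ∑ s : S, ((Finset.univ.filter (fun i : Fin N => traj i t = s)).card : ℝ) * r s
      = ∑ i : Fin N, r (traj i t) := by
  simp only [Finset.card_filter]
  push_cast
  simp only [Finset.sum_mul]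
  rw [Finset.sum_comm]
  congr 1; ext i
  simp

end aux

/-- Policy-improvement theorem for SSRL. If the buffer trajectories satisfy
the uniformly-distributed condition and their mean discounted cumulative reward is at
least `R(π)` (trajectories improvement `δ(τ) ≥ 0`), then the hypothetical policy `π̃`
constructed from the buffer (via its occupancy measure) satisfies `R(π̃) ≥ R(π)`. -/
theorem ssrl_policy_improvement
    {S A : Type*} [Fintype S] [Fintype A] [DecidableEq S] [DecidableEq A]
    (N T : ℕ) (hN : 0 < N) (traj : Fin N → ℕ → S) (act : Fin N → ℕ → A)
    (p₀ : S → ℝ) (P : S → S → A → ℝ)   -- P s' s a = P(s'|s,a)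
    (γ : ℝ) (hγ : 0 < γ) (hγ1 : γ < 1) (r : S → ℝ)
    (Rπ : ℝ)                            -- expected discounted cumulative reward of current policy π
    (p : ℕ → S → ℝ)                     -- occupancy measure of the hypothetical policy π̃
    -- uniformly-distributed condition, initial states
    (hinit : ∀ s : S, p₀ s =
      ((Finset.univ.filter (fun i : Fin N => traj i 0 = s)).card : ℝ) / (N : ℝ))
    -- uniformly-distributed condition, transitions
    (huni : ∀ (s : S) (a : A) (s' : S) (t : ℕ),
      0 < ∑ s'' : S, transCount N traj act s a s'' t →
      P s' s a = (transCount N traj act s a s' t : ℝ)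
                  / (∑ s'' : S, transCount N traj act s a s'' t : ℕ))
    -- occupancy recursion under the hypothetical policy π̃ (empirical action frequencies)
    (hp0 : ∀ s : S, p 0 s = p₀ s)
    (hrec : ∀ (t : ℕ) (s : S), p (t + 1) s =
      ∑ s' : S, ∑ a : A, p t s'
        * (((∑ s'' : S, transCount N traj act s' a s'' t : ℕ) : ℝ)
            / (((Finset.univ.filter (fun i : Fin N => traj i t = s')).card : ℕ) : ℝ))
        * P s s' a)
    -- trajectories improvement δ(τ) = (1/|τ|) ∑_i R(τ_i) − R(π) ≥ 0
    (hδ : (1 / (N : ℝ)) * ∑ i : Fin N, ∑ t ∈ Finset.range (T + 1), γ ^ t * r (traj i t)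
            - Rπ ≥ 0) :
    -- R(π̃) = ∑_s ρ_π̃(s) r(s) ≥ R(π)
    ∑ s : S, (∑ t ∈ Finset.range (T + 1), γ ^ t * p t s) * r s ≥ Rπ := by
  have hNR : (0:ℝ) < (N:ℝ) := by exact_mod_cast hN
  -- occupancy equals empirical state frequencies
  have key : ∀ (t : ℕ) (s : S), p t s =
      ((Finset.univ.filter (fun i : Fin N => traj i t = s)).card : ℝ) / (N : ℝ) := by
    intro t
    induction t with
    | zero => intro s; rw [hp0, hinit]
    | succ t ih =>
      intro s
      rw [hrec]
      have hterm : ∀ (s' : S) (a : A),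
          p t s' * (((∑ s'' : S, transCount N traj act s' a s'' t : ℕ) : ℝ)
            / (((Finset.univ.filter (fun i : Fin N => traj i t = s')).card : ℕ) : ℝ))
            * P s s' a
          = (transCount N traj act s' a s t : ℝ) / (N : ℝ) := by
        intro s' a
        by_cases hM : 0 < ∑ s'' : S, transCount N traj act s' a s'' t
        · have hPeq := huni s' a s t hM
          have hcard : transCount N traj act s' a s t
              ≤ ∑ s'' : S, transCount N traj act s' a s'' t :=
            Finset.single_le_sum (f := fun s'' => transCount N traj act s' a s'' t)
              (fun _ _ => Nat.zero_le _) (Finset.mem_univ s)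
          have hMle : ∑ s'' : S, transCount N traj act s' a s'' t
              ≤ (Finset.univ.filter (fun i : Fin N => traj i t = s')).card := by
            rw [sum_transCount_eq]
            exact Finset.card_le_card (by
              intro i hi
              simp only [Finset.mem_filter] at hi ⊢
              exact ⟨hi.1, hi.2.1⟩)
          have hC : 0 < (Finset.univ.filter (fun i : Fin N => traj i t = s')).card :=
            lt_of_lt_of_le hM hMle
          have hMR : ((∑ s'' : S, transCount N traj act s' a s'' t : ℕ) : ℝ) ≠ 0 := by
            exact_mod_cast hM.ne'
          have hCR : (((Finset.univ.filter (fun i : Fin N => traj i t = s')).card : ℕ) : ℝ) ≠ 0 := by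
            exact_mod_cast hC.ne'
          rw [ih, hPeq]
          calc ((Finset.univ.filter (fun i : Fin N => traj i t = s')).card : ℝ) / (N : ℝ)
                * (((∑ s'' : S, transCount N traj act s' a s'' t : ℕ) : ℝ)
                  / (((Finset.univ.filter (fun i : Fin N => traj i t = s')).card : ℕ) : ℝ))
                * ((transCount N traj act s' a s t : ℝ)
                  / ((∑ s'' : S, transCount N traj act s' a s'' t : ℕ) : ℝ))
              = (transCount N traj act s' a s t : ℝ)
                * ((((Finset.univ.filter (fun i : Fin N => traj i t = s')).card : ℝ)
                    / ((Finset.univ.filter (fun i : Fin N => traj i t = s')).card : ℝ))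
                  * (((∑ s'' : S, transCount N traj act s' a s'' t : ℕ) : ℝ)
                    / ((∑ s'' : S, transCount N traj act s' a s'' t : ℕ) : ℝ))) / (N : ℝ) := by
                ring
            _ = (transCount N traj act s' a s t : ℝ) / (N : ℝ) := by
                rw [div_self hCR, div_self hMR]; ring
        · have hM0 : ∑ s'' : S, transCount N traj act s' a s'' t = 0 :=
            Nat.eq_zero_of_not_pos hM
          have hC0 : transCount N traj act s' a s t = 0 := by
            by_contra h
            exact hM (lt_of_lt_of_le (Nat.pos_of_ne_zero h)
              (Finset.single_le_sum (f := fun s'' => transCount N traj act s' a s'' t)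
                (fun _ _ => Nat.zero_le _) (Finset.mem_univ s)))
          rw [hM0, hC0]
          simp
      calc ∑ s' : S, ∑ a : A, p t s'
          * (((∑ s'' : S, transCount N traj act s' a s'' t : ℕ) : ℝ)
            / (((Finset.univ.filter (fun i : Fin N => traj i t = s')).card : ℕ) : ℝ))
          * P s s' a
          = ∑ s' : S, ∑ a : A, (transCount N traj act s' a s t : ℝ) / (N : ℝ) := by
            exact Finset.sum_congr rfl fun s' _ => Finset.sum_congr rfl fun a _ => hterm s' a
        _ = (((∑ s' : S, ∑ a : A, transCount N traj act s' a s t : ℕ) : ℝ)) / (N : ℝ) := by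
            push_cast
            simp [Finset.sum_div]
        _ = ((Finset.univ.filter (fun i : Fin N => traj i (t + 1) = s)).card : ℝ) / (N : ℝ) := by
            rw [sum_sum_transCount_eq]
  -- rewrite the objective
  have hLHS : ∑ s : S, (∑ t ∈ Finset.range (T + 1), γ ^ t * p t s) * r s
      = (1 / (N : ℝ)) * ∑ i : Fin N, ∑ t ∈ Finset.range (T + 1), γ ^ t * r (traj i t) := by
    calc ∑ s : S, (∑ t ∈ Finset.range (T + 1), γ ^ t * p t s) * r s
        = ∑ t ∈ Finset.range (T + 1), ∑ s : S, γ ^ t * p t s * r s := by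
          rw [Finset.sum_comm]
          exact Finset.sum_congr rfl fun s _ => Finset.sum_mul _ _ _
      _ = ∑ t ∈ Finset.range (T + 1), (1 / (N : ℝ)) * (γ ^ t *
            ∑ s : S, ((Finset.univ.filter (fun i : Fin N => traj i t = s)).card : ℝ) * r s) := by
          refine Finset.sum_congr rfl fun t _ => ?_
          rw [Finset.mul_sum, Finset.mul_sum]
          refine Finset.sum_congr rfl fun s _ => ?_
          rw [key t s]
          field_simp
      _ = ∑ t ∈ Finset.range (T + 1), (1 / (N : ℝ)) * (γ ^ t * ∑ i : Fin N, r (traj i t)) := by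
          refine Finset.sum_congr rfl fun t _ => ?_
          rw [sum_count_mul]
      _ = (1 / (N : ℝ)) * ∑ i : Fin N, ∑ t ∈ Finset.range (T + 1), γ ^ t * r (traj i t) := by
          simp only [Finset.mul_sum]
          exact Finset.sum_comm
  rw [hLHS]
  linarith
end
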